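/- arXiv:2307.08641 — 2 statements merged into one kernel-verified Lean document; each statement's English description precedes it below -/
import Mathlib

section
/- Let T > 0, let λ : [0,T] → [0,∞) be continuous with λ > 0 on (0,T], Λ(t) := ∫₀ᵗ λ(s) ds, and assume λ(t)² ≤ K·Λ(t) on (0,T]. Fix N > 0, a real r ≥ e, and t* ∈ (0,T] with Λ(t*)·r = N·ln r. Then ∫₀^{t*} (1 + (λ(τ)²/Λ(τ))·r·ln r)^{1/2} dτ ≤ T + 2·√N·ln r. -/
/-- `Λ(t) = ∫₀ᵗ λ(s) ds`. -/
noncomputable def Lam (lam : ℝ → ℝ) (t : ℝ) : ℝ := ∫ s in (0:ℝ)..t, lam s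

/-- The pseudodifferential-zone integral bound used before Proposition 5.11 of the
paper: `∫₀^{t*} ρ(τ) dτ ≤ T + 2√N·ln r`, where `t*` is the zone-boundary time
(`Λ(t*)·r = N·ln r`) and `r` abstracts `⟨x⟩⟨ξ⟩`. -/
theorem pd_zone_integral_bound
    (T : ℝ) (hT : 0 < T) (lam : ℝ → ℝ)
    (hcont : ContinuousOn lam (Set.Icc 0 T))
    (hnn : ∀ t ∈ Set.Icc 0 T, 0 ≤ lam t)
    (hpos : ∀ t ∈ Set.Ioc 0 T, 0 < lam t)
    (K : ℝ) (hK : 0 < K)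
    (hKb : ∀ t ∈ Set.Ioc 0 T, lam t ^ 2 ≤ K * Lam lam t)
    (N r tstar : ℝ) (hN : 0 < N) (hr : Real.exp 1 ≤ r)
    (htstar : tstar ∈ Set.Ioc 0 T)
    (heq : Lam lam tstar * r = N * Real.log r) :
    (∫ τ in (0:ℝ)..tstar,
        Real.sqrt (1 + lam τ ^ 2 / Lam lam τ * r * Real.log r))
      ≤ T + 2 * Real.sqrt N * Real.log r := by
  obtain ⟨ht0, htT⟩ := htstar
  have hr0 : (0:ℝ) < r := lt_of_lt_of_le (Real.exp_pos 1) hr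
  have hlr : (1:ℝ) ≤ Real.log r := by
    have := Real.log_le_log (Real.exp_pos 1) hr
    rwa [Real.log_exp] at this
  have hlr0 : (0:ℝ) ≤ Real.log r := le_trans zero_le_one hlr
  have hrl0 : (0:ℝ) ≤ r * Real.log r := mul_nonneg hr0.le hlr0
  -- interval integrability of lam
  have hcont' : ContinuousOn lam (Set.uIcc 0 T) := by
    rw [Set.uIcc_of_le hT.le]; exact hcont
  have hLIT : IntervalIntegrable lam MeasureTheory.volume 0 T :=
    hcont'.intervalIntegrable
  have hLI : ∀ t ∈ Set.Icc (0:ℝ) T, IntervalIntegrable lam MeasureTheory.volume 0 t := by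
    intro t ht
    refine hLIT.mono_set ?_
    rw [Set.uIcc_of_le ht.1, Set.uIcc_of_le hT.le]
    exact Set.Icc_subset_Icc le_rfl ht.2
  -- continuity of Lam
  have hLcont : ContinuousOn (Lam lam) (Set.Icc 0 T) := by
    have := intervalIntegral.continuousOn_primitive_interval' hLIT Set.left_mem_uIcc
    rwa [Set.uIcc_of_le hT.le] at this
  -- positivity of Lam on (0,T]
  have hLpos : ∀ t ∈ Set.Ioc (0:ℝ) T, 0 < Lam lam t := by
    intro t ht
    exact intervalIntegral.intervalIntegral_pos_of_pos_on (hLI t ⟨ht.1.le, ht.2⟩)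
      (fun x hx => hpos x ⟨hx.1, hx.2.le.trans ht.2⟩) ht.1
  have hL0 : Lam lam 0 = 0 := intervalIntegral.integral_same
  -- pointwise bound lam/√Lam ≤ √K on (0,T]
  set g : ℝ → ℝ := fun τ => lam τ / Real.sqrt (Lam lam τ) with hg
  have hgbd : ∀ t ∈ Set.Ioc (0:ℝ) T, g t ≤ Real.sqrt K := by
    intro t ht
    have hLt := hLpos t ht
    have hsq : (0:ℝ) < Real.sqrt (Lam lam t) := Real.sqrt_pos.2 hLt
    rw [hg, div_le_iff₀ hsq]
    have h1 : lam t ≤ Real.sqrt (K * Lam lam t) := by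
      have := Real.sqrt_le_sqrt (hKb t ht)
      rwa [Real.sqrt_sq (hnn t ⟨ht.1.le, ht.2⟩)] at this
    rwa [Real.sqrt_mul hK.le] at h1
  have hgnn : ∀ t, 0 ≤ g t → True := fun _ _ => trivial
  -- integrability of g on [0, tstar]
  have hgcontOn : ContinuousOn g (Set.Ioc 0 tstar) := by
    apply ContinuousOn.div
    · exact hcont.mono (fun x hx => ⟨hx.1.le, hx.2.trans htT⟩)
    · exact ((hLcont.mono (fun x hx => ⟨hx.1.le, hx.2.trans htT⟩)).sqrt)
    · intro x hx
      exact (Real.sqrt_pos.2 (hLpos x ⟨hx.1, hx.2.trans htT⟩)).ne'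
  have hgint : IntervalIntegrable g MeasureTheory.volume 0 tstar := by
    rw [intervalIntegrable_iff_integrableOn_Ioc_of_le ht0.le]
    apply MeasureTheory.Integrable.mono'
      (MeasureTheory.integrable_const (Real.sqrt K))
      (hgcontOn.aestronglyMeasurable measurableSet_Ioc)
    rw [MeasureTheory.ae_restrict_iff' measurableSet_Ioc]
    filter_upwards with x hx
    have hx' : x ∈ Set.Ioc (0:ℝ) T := ⟨hx.1, hx.2.trans htT⟩
    have h0 : 0 ≤ g x := div_nonneg (hnn x ⟨hx.1.le, hx'.2⟩) (Real.sqrt_nonneg _)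
    rw [Real.norm_eq_abs, abs_of_nonneg h0]
    exact hgbd x hx'
  -- FTC: ∫ g = 2 √(Lam tstar)
  have hFTC : (∫ τ in (0:ℝ)..tstar, g τ) = 2 * Real.sqrt (Lam lam tstar) := by
    have hFcont : ContinuousOn (fun t => 2 * Real.sqrt (Lam lam t)) (Set.Icc 0 tstar) :=
      continuousOn_const.mul ((hLcont.mono (Set.Icc_subset_Icc le_rfl htT)).sqrt)
    have hFderiv : ∀ x ∈ Set.Ioo (0:ℝ) tstar,
        HasDerivWithinAt (fun t => 2 * Real.sqrt (Lam lam t)) (g x) (Set.Ioi x) x := by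
      intro x hx
      have hxT : x ∈ Set.Ioc (0:ℝ) T := ⟨hx.1, hx.2.le.trans htT⟩
      have hLx := hLpos x hxT
      have hLd : HasDerivAt (Lam lam) (lam x) x := by
        apply intervalIntegral.integral_hasDerivAt_right (hLI x ⟨hx.1.le, hxT.2⟩)
        · exact ContinuousAt.stronglyMeasurableAtFilter (s := Set.Ioo (0:ℝ) T) isOpen_Ioo
            (fun y hy => hcont.continuousAt (Icc_mem_nhds hy.1 hy.2))
            x ⟨hx.1, hx.2.trans_le htT⟩
        · exact hcont.continuousAt (Icc_mem_nhds hx.1 (hx.2.trans_le htT))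
      have hsd : HasDerivAt (fun t => 2 * Real.sqrt (Lam lam t))
          (2 * (1 / (2 * Real.sqrt (Lam lam x)) * lam x)) x :=
        ((Real.hasDerivAt_sqrt hLx.ne').comp x hLd).const_mul 2
      have heqd : 2 * (1 / (2 * Real.sqrt (Lam lam x)) * lam x) = g x := by
        have hs : Real.sqrt (Lam lam x) ≠ 0 := (Real.sqrt_pos.2 hLx).ne'
        field_simp [hg]; simp only [hg]; field_simp
      rw [heqd] at hsd
      exact hsd.hasDerivWithinAt
    have := intervalIntegral.integral_eq_sub_of_hasDeriv_right_of_le ht0.le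
      hFcont hFderiv hgint
    rw [this, hL0, Real.sqrt_zero]
    ring
  -- pointwise comparison of the integrands
  have hptwise : ∀ x ∈ Set.Icc (0:ℝ) tstar,
      Real.sqrt (1 + lam x ^ 2 / Lam lam x * r * Real.log r)
        ≤ 1 + Real.sqrt (r * Real.log r) * g x := by
    intro x hx
    rcases eq_or_lt_of_le hx.1 with h0 | h0
    · have hL : Lam lam x = 0 := by rw [← h0, hL0]
      rw [hL, div_zero, zero_mul, zero_mul, add_zero, Real.sqrt_one]
      have : 0 ≤ Real.sqrt (r * Real.log r) * g x := by
        apply mul_nonneg (Real.sqrt_nonneg _)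
        exact div_nonneg (hnn x ⟨hx.1, hx.2.trans htT⟩) (Real.sqrt_nonneg _)
      linarith
    · have hxT : x ∈ Set.Ioc (0:ℝ) T := ⟨h0, hx.2.trans htT⟩
      have hLx := hLpos x hxT
      set a : ℝ := lam x ^ 2 / Lam lam x * r * Real.log r with ha
      have ha0 : 0 ≤ a := by
        apply mul_nonneg (mul_nonneg _ hr0.le) hlr0
        exact div_nonneg (sq_nonneg _) hLx.le
      have hsa : Real.sqrt (1 + a) ≤ 1 + Real.sqrt a := by
        have h1 : Real.sqrt (1 + a) ≤ Real.sqrt ((1 + Real.sqrt a) ^ 2) := by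
          apply Real.sqrt_le_sqrt
          nlinarith [Real.sq_sqrt ha0, Real.sqrt_nonneg a]
        rwa [Real.sqrt_sq (by positivity)] at h1
      have hsplit : Real.sqrt a = Real.sqrt (r * Real.log r) * g x := by
        rw [ha, mul_assoc, mul_comm (lam x ^ 2 / Lam lam x), Real.sqrt_mul hrl0,
          Real.sqrt_div (sq_nonneg _), Real.sqrt_sq (hnn x ⟨hx.1, hxT.2⟩)]
      rw [hsplit] at hsa
      exact hsa
  -- integrability of the left integrand
  have hhint : IntervalIntegrable
      (fun τ => Real.sqrt (1 + lam τ ^ 2 / Lam lam τ * r * Real.log r))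
      MeasureTheory.volume 0 tstar := by
    rw [intervalIntegrable_iff_integrableOn_Ioc_of_le ht0.le]
    apply MeasureTheory.Integrable.mono'
      (MeasureTheory.integrable_const (Real.sqrt (1 + K * (r * Real.log r))))
    · apply ContinuousOn.aestronglyMeasurable _ measurableSet_Ioc
      apply ContinuousOn.sqrt
      apply ContinuousOn.add continuousOn_const
      apply ContinuousOn.mul (ContinuousOn.mul _ continuousOn_const) continuousOn_const
      apply ContinuousOn.div
      · exact ((hcont.mono (fun x hx => ⟨hx.1.le, hx.2.trans htT⟩)).pow 2)
      · exact hLcont.mono (fun x hx => ⟨hx.1.le, hx.2.trans htT⟩)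
      · exact fun x hx => (hLpos x ⟨hx.1, hx.2.trans htT⟩).ne'
    · rw [MeasureTheory.ae_restrict_iff' measurableSet_Ioc]
      filter_upwards with x hx
      have hxT : x ∈ Set.Ioc (0:ℝ) T := ⟨hx.1, hx.2.trans htT⟩
      have hLx := hLpos x hxT
      have hb : lam x ^ 2 / Lam lam x ≤ K := by
        rw [div_le_iff₀ hLx]
        exact hKb x hxT
      rw [Real.norm_eq_abs, abs_of_nonneg (Real.sqrt_nonneg _)]
      apply Real.sqrt_le_sqrt
      have h1 : lam x ^ 2 / Lam lam x * r * Real.log r ≤ K * (r * Real.log r) := by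
        rw [mul_assoc]
        exact mul_le_mul_of_nonneg_right hb hrl0
      linarith
  -- integrability of the right integrand
  have hrint : IntervalIntegrable
      (fun τ => 1 + Real.sqrt (r * Real.log r) * g τ) MeasureTheory.volume 0 tstar :=
    intervalIntegrable_const.add (hgint.const_mul _)
  -- combine
  have hmono := intervalIntegral.integral_mono_on ht0.le hhint hrint hptwise
  have hval : (∫ τ in (0:ℝ)..tstar, (1 + Real.sqrt (r * Real.log r) * g τ))
      = tstar + Real.sqrt (r * Real.log r) * (2 * Real.sqrt (Lam lam tstar)) := by
    rw [intervalIntegral.integral_add intervalIntegrable_const (hgint.const_mul _),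
      intervalIntegral.integral_const_mul, hFTC,
      intervalIntegral.integral_const, smul_eq_mul, mul_one, sub_zero]
  -- final arithmetic
  have hkey : Real.sqrt (r * Real.log r) * Real.sqrt (Lam lam tstar)
      = Real.sqrt N * Real.log r := by
    rw [← Real.sqrt_mul hrl0]
    have : r * Real.log r * Lam lam tstar = N * Real.log r ^ 2 := by
      nlinarith [heq]
    rw [this, Real.sqrt_mul hN.le, Real.sqrt_sq hlr0]
  calc (∫ τ in (0:ℝ)..tstar,
        Real.sqrt (1 + lam τ ^ 2 / Lam lam τ * r * Real.log r))
      ≤ tstar + Real.sqrt (r * Real.log r) * (2 * Real.sqrt (Lam lam tstar)) := by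
        rw [← hval]; exact hmono
    _ = tstar + 2 * (Real.sqrt (r * Real.log r) * Real.sqrt (Lam lam tstar)) := by ring
    _ = tstar + 2 * (Real.sqrt N * Real.log r) := by rw [hkey]
    _ ≤ T + 2 * Real.sqrt N * Real.log r := by linarith
end

section
/- Let T > 0, let λ : [0,T] → [0,∞) be continuous with λ > 0 on (0,T], and Λ(t) := ∫₀ᵗ λ(s) ds. Fix N > 0, a real r ≥ e, and t₁, t₂ ∈ (0,T] with t₁ ≤ t₂ and Λ(t₁)·r = N·ln r. Then ∫_{t₁}^{t₂} (ln r)²·r^{−1}·λ(τ)/Λ(τ)² dτ ≤ (ln r)/N. -/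
/-- The oscillation-subzone integral bound used before Proposition 5.11 of the paper:
`∫_{t₁}^{t₂} (ln r)²·r⁻¹·λ(τ)/Λ(τ)² dτ ≤ (ln r)/N`, where `t₁` is the zone-boundary
time (`Λ(t₁)·r = N·ln r`) and `r` abstracts `⟨x⟩⟨ξ⟩`. -/
theorem osc_zone_integral_bound
    (T : ℝ) (hT : 0 < T) (lam : ℝ → ℝ)
    (hcont : ContinuousOn lam (Set.Icc 0 T))
    (hnn : ∀ t ∈ Set.Icc 0 T, 0 ≤ lam t)
    (hpos : ∀ t ∈ Set.Ioc 0 T, 0 < lam t)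
    (N r t₁ t₂ : ℝ) (hN : 0 < N) (hr : Real.exp 1 ≤ r)
    (ht₁ : t₁ ∈ Set.Ioc 0 T) (ht₂ : t₂ ∈ Set.Ioc 0 T) (h12 : t₁ ≤ t₂)
    (heq : Lam lam t₁ * r = N * Real.log r) :
    (∫ τ in t₁..t₂, Real.log r ^ 2 * r⁻¹ * (lam τ / Lam lam τ ^ 2))
      ≤ Real.log r / N := by
  obtain ⟨ht₁0, ht₁T⟩ := ht₁
  obtain ⟨ht₂0, ht₂T⟩ := ht₂
  have hr0 : (0:ℝ) < r := lt_of_lt_of_le (Real.exp_pos 1) hr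
  have hlr : (1:ℝ) ≤ Real.log r := (Real.le_log_iff_exp_le hr0).2 (by simpa using hr)
  have hlr0 : (0:ℝ) < Real.log r := lt_of_lt_of_le one_pos hlr
  have hΛ1 : Lam lam t₁ = N * Real.log r / r := by
    field_simp
    linarith
  have hΛ1pos : 0 < Lam lam t₁ := by rw [hΛ1]; positivity
  -- integrability of lam on subintervals of [0,T]
  have hint : ∀ a b, a ∈ Set.Icc (0:ℝ) T → b ∈ Set.Icc (0:ℝ) T →
      IntervalIntegrable lam MeasureTheory.volume a b := by
    intro a b ha hb
    exact (hcont.mono (Set.uIcc_subset_Icc ha hb)).intervalIntegrable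
  have ht₁mem : t₁ ∈ Set.Icc (0:ℝ) T := ⟨le_of_lt ht₁0, ht₁T⟩
  have ht₂mem : t₂ ∈ Set.Icc (0:ℝ) T := ⟨le_of_lt ht₂0, ht₂T⟩
  have hsub : Set.Icc t₁ t₂ ⊆ Set.Icc (0:ℝ) T := Set.Icc_subset_Icc ht₁mem.1 ht₂mem.2
  -- Lam t = Lam t₁ + ∫_{t₁}^t lam for t ∈ [t₁,t₂]
  have hsplit : ∀ t ∈ Set.Icc t₁ t₂, Lam lam t = Lam lam t₁ + ∫ s in t₁..t, lam s := by
    intro t ht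
    have htmem : t ∈ Set.Icc (0:ℝ) T := hsub ht
    have := intervalIntegral.integral_add_adjacent_intervals
      (hint 0 t₁ ⟨le_refl 0, hT.le⟩ ht₁mem) (hint t₁ t ht₁mem htmem)
    simp only [Lam]
    linarith [this]
  -- Λ is ≥ Λ(t₁) > 0 on [t₁,t₂]
  have hΛpos : ∀ t ∈ Set.Icc t₁ t₂, 0 < Lam lam t := by
    intro t ht
    have h1 : 0 ≤ ∫ s in t₁..t, lam s := by
      apply intervalIntegral.integral_nonneg ht.1
      intro u hu
      exact hnn u (hsub ⟨hu.1, le_trans hu.2 ht.2⟩)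
    rw [hsplit t ht]; linarith
  have hΛne : ∀ t ∈ Set.Icc t₁ t₂, Lam lam t ≠ 0 := fun t ht => (hΛpos t ht).ne'
  -- continuity of Λ on [t₁,t₂]
  have hΛcont : ContinuousOn (Lam lam) (Set.Icc t₁ t₂) := by
    have hprim : ContinuousOn (fun x => ∫ s in t₁..x, lam s) (Set.uIcc t₁ t₂) :=
      intervalIntegral.continuousOn_primitive_interval
        ((hcont.mono (by rw [Set.uIcc_of_le h12]; exact hsub)).integrableOn_compact
          (by rw [Set.uIcc_of_le h12]; exact isCompact_Icc))
    rw [Set.uIcc_of_le h12] at hprim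
    exact ((continuousOn_const.add hprim).congr hsplit)
  -- derivative of Λ on the interior
  have hΛderiv : ∀ τ ∈ Set.Ioo t₁ t₂, HasDerivAt (Lam lam) (lam τ) τ := by
    intro τ hτ
    have hτIoo : τ ∈ Set.Ioo (0:ℝ) T := ⟨lt_trans ht₁0 hτ.1, lt_of_lt_of_le hτ.2 ht₂T⟩
    have hτnhds : Set.Icc (0:ℝ) T ∈ nhds τ :=
      Filter.mem_of_superset (isOpen_Ioo.mem_nhds hτIoo) Set.Ioo_subset_Icc_self
    have hca : ContinuousAt lam τ := hcont.continuousAt hτnhds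
    have hmeas : StronglyMeasurableAtFilter lam (nhds τ) MeasureTheory.volume := by
      refine ⟨Set.Ioo (0:ℝ) T, isOpen_Ioo.mem_nhds hτIoo, ?_⟩
      exact ((hcont.mono Set.Ioo_subset_Icc_self).aestronglyMeasurable measurableSet_Ioo)
    exact intervalIntegral.integral_hasDerivAt_right
      (hint 0 τ ⟨le_refl 0, hT.le⟩
        (hsub ⟨le_of_lt hτ.1, le_of_lt hτ.2⟩)) hmeas hca
  -- FTC for F = -(Λ)⁻¹
  set F : ℝ → ℝ := fun t => -(Lam lam t)⁻¹ with hF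
  have hFcont : ContinuousOn F (Set.Icc t₁ t₂) := (hΛcont.inv₀ hΛne).neg
  have hFderiv : ∀ τ ∈ Set.Ioo t₁ t₂,
      HasDerivWithinAt F (lam τ / Lam lam τ ^ 2) (Set.Ioi τ) τ := by
    intro τ hτ
    have hne : Lam lam τ ≠ 0 := hΛne τ ⟨le_of_lt hτ.1, le_of_lt hτ.2⟩
    have h := ((hΛderiv τ hτ).inv hne).neg
    have : -(-(lam τ) / Lam lam τ ^ 2) = lam τ / Lam lam τ ^ 2 := by ring
    rw [this] at h
    exact h.hasDerivWithinAt
  have hgint : IntervalIntegrable (fun τ => lam τ / Lam lam τ ^ 2)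
      MeasureTheory.volume t₁ t₂ := by
    apply ContinuousOn.intervalIntegrable
    rw [Set.uIcc_of_le h12]
    exact ((hcont.mono hsub).div ((hΛcont.pow 2)) (fun t ht => pow_ne_zero 2 (hΛne t ht)))
  have key : (∫ τ in t₁..t₂, lam τ / Lam lam τ ^ 2) = F t₂ - F t₁ :=
    intervalIntegral.integral_eq_sub_of_hasDeriv_right_of_le h12 hFcont hFderiv hgint
  -- final estimate
  have hΛ2pos : 0 < Lam lam t₂ := hΛpos t₂ ⟨h12, le_refl t₂⟩
  have hbound : (∫ τ in t₁..t₂, lam τ / Lam lam τ ^ 2) ≤ (Lam lam t₁)⁻¹ := by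
    rw [key, hF]
    simp only
    have : 0 < (Lam lam t₂)⁻¹ := inv_pos.2 hΛ2pos
    linarith
  have hc : 0 ≤ Real.log r ^ 2 * r⁻¹ := by positivity
  calc (∫ τ in t₁..t₂, Real.log r ^ 2 * r⁻¹ * (lam τ / Lam lam τ ^ 2))
      = Real.log r ^ 2 * r⁻¹ * ∫ τ in t₁..t₂, lam τ / Lam lam τ ^ 2 := by
        rw [intervalIntegral.integral_const_mul]
    _ ≤ Real.log r ^ 2 * r⁻¹ * (Lam lam t₁)⁻¹ := by
        exact mul_le_mul_of_nonneg_left hbound hc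
    _ = Real.log r / N := by
        rw [hΛ1]
        field_simp
end
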